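/- Suppose n : [0,∞) → (0,∞) is measurable and n(t) → n* > 0 as t → ∞. Let B ≥ 0 and D ≥ 0 be random variables with E[D] < ∞, and define f(s,t) = P{B > ∫_s^t du/n(u), D > t−s}. Then ∫_0^t f(s,t) ds → E[min{n* B, D}] as t → ∞. -/

import Mathlib

open MeasureTheory Set Filter Topology

lemma tendsto_primitive_aux (nf : ℝ → ℝ) (hmn : Measurable nf) (nstar : ℝ)
    (hnstar : 0 < nstar) (hlim : Tendsto nf atTop (nhds nstar)) (r : ℝ) (hr : 0 ≤ r) :
    Tendsto (fun t => ∫ u in (t - r)..t, 1 / nf u) atTop (𝓝 (r / nstar)) := by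
  have hinv : Tendsto (fun u => 1 / nf u) atTop (𝓝 (1 / nstar)) := by
    simpa [one_div] using hlim.inv₀ hnstar.ne'
  rw [Metric.tendsto_atTop]
  intro ε hε
  set ε' := ε / (r + 1) with hε'def
  have hε'pos : 0 < ε' := div_pos hε (by linarith)
  obtain ⟨T, hT⟩ := Metric.tendsto_atTop.1 hinv ε' hε'pos
  refine ⟨T + r, fun t ht => ?_⟩
  have htr : T ≤ t - r := by linarith
  have hle : t - r ≤ t := by linarith
  have hbd : ∀ u ∈ Set.uIoc (t - r) t, ‖1 / nf u - 1 / nstar‖ ≤ ε' := by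
    intro u hu
    rw [Set.uIoc_of_le hle] at hu
    have : T ≤ u := le_trans htr hu.1.le
    have := hT u this
    rw [Real.dist_eq] at this
    exact (Real.norm_eq_abs _ ▸ this.le)
  have hint : IntervalIntegrable (fun u => 1 / nf u) volume (t - r) t := by
    rw [intervalIntegrable_iff]
    apply Measure.integrableOn_of_bounded (M := ‖1 / nstar‖ + ε')
    · exact (measure_Ioc_lt_top (a := min (t-r) t) (b := max (t-r) t)).ne
    · exact ((measurable_const.div hmn).aestronglyMeasurable)
    · rw [ae_restrict_iff' measurableSet_uIoc]
      refine Eventually.of_forall fun u hu => ?_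
      have := hbd u hu
      calc ‖1 / nf u‖ = ‖(1 / nf u - 1 / nstar) + 1 / nstar‖ := by ring_nf
        _ ≤ ‖1 / nf u - 1 / nstar‖ + ‖1 / nstar‖ := norm_add_le _ _
        _ ≤ ε' + ‖1 / nstar‖ := by linarith
        _ = ‖1 / nstar‖ + ε' := by ring
  have key : (∫ u in (t - r)..t, 1 / nf u) - r / nstar
      = ∫ u in (t - r)..t, (1 / nf u - 1 / nstar) := by
    rw [intervalIntegral.integral_sub hint intervalIntegrable_const,
      intervalIntegral.integral_const]
    have : (t - (t - r)) • (1 / nstar) = r / nstar := by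
      rw [smul_eq_mul]; ring
    rw [this]
  have hbound : ‖(∫ u in (t - r)..t, 1 / nf u) - r / nstar‖ ≤ ε' * r := by
    rw [key]
    have := intervalIntegral.norm_integral_le_of_norm_le_const hbd
    simpa [abs_of_nonneg hr, mul_comm] using this
  rw [Real.dist_eq]
  have : ε' * r < ε := by
    have h1 : ε' * (r + 1) = ε := by
      rw [hε'def]; field_simp
    nlinarith
  calc |(∫ u in (t - r)..t, 1 / nf u) - r / nstar| ≤ ε' * r := by
        simpa [Real.norm_eq_abs] using hbound
    _ < ε := this
lemma tendsto_meas_gt {Ω : Type*} [MeasurableSpace Ω] (ν : Measure Ω) [IsFiniteMeasure ν]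
    {B : Ω → ℝ} (hmB : Measurable B) {c : ℝ} (hc : ν {ω | B ω = c} = 0)
    {a : ℝ → ℝ} (ha : Tendsto a atTop (𝓝 c)) :
    Tendsto (fun t => (ν {ω | a t < B ω}).toReal) atTop
      (𝓝 ((ν {ω | c < B ω}).toReal)) := by
  set φ : ℝ → ℝ := fun x => (ν {ω | x < B ω}).toReal with hφ
  have hmono : ∀ {x y : ℝ}, x ≤ y → φ y ≤ φ x := by
    intro x y hxy
    exact ENNReal.toReal_mono (measure_ne_top _ _)
      (measure_mono fun ω hω => lt_of_le_of_lt hxy hω)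
  have hmeas : ∀ x : ℝ, MeasurableSet {ω | x < B ω} := fun x => hmB measurableSet_Ioi
  -- left sequence
  have hL : Tendsto (fun n : ℕ => φ (c - 1 / (n + 1))) atTop (𝓝 (φ c)) := by
    have hS : Tendsto (fun n : ℕ => ν {ω | c - 1 / (n + 1) < B ω}) atTop
        (𝓝 (ν (⋂ n : ℕ, {ω | c - 1 / (n + 1 : ℝ) < B ω}))) := by
      apply tendsto_measure_iInter_atTop (fun n => (hmeas _).nullMeasurableSet)
      · intro n m hnm ω hω
        have h1 : c - 1 / (n + 1 : ℝ) ≤ c - 1 / (m + 1 : ℝ) := by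
          have : (1 : ℝ) / (m + 1) ≤ 1 / (n + 1) := by
            apply one_div_le_one_div_of_le (by positivity)
            have : (n : ℝ) ≤ m := Nat.cast_le.2 hnm
            linarith
          linarith
        exact lt_of_le_of_lt h1 hω
      · exact ⟨0, measure_ne_top _ _⟩
    have hset : (⋂ n : ℕ, {ω | c - 1 / (n + 1 : ℝ) < B ω}) = {ω | c ≤ B ω} := by
      ext ω
      simp only [mem_iInter, mem_setOf_eq]
      constructor
      · intro h
        by_contra hcon
        push_neg at hcon
        obtain ⟨n, hn⟩ := exists_nat_one_div_lt (sub_pos.2 hcon)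
        have := h n
        linarith
      · intro h n
        have : (0 : ℝ) < 1 / (n + 1) := by positivity
        linarith
    have hval : ν {ω | c ≤ B ω} = ν {ω | c < B ω} := by
      apply le_antisymm
      · calc ν {ω | c ≤ B ω} ≤ ν ({ω | c < B ω} ∪ {ω | B ω = c}) := by
              apply measure_mono; intro ω hω
              have hω' : c ≤ B ω := hω
              rcases lt_or_eq_of_le hω' with h | h
              · exact Or.inl h
              · exact Or.inr h.symm
          _ ≤ ν {ω | c < B ω} + ν {ω | B ω = c} := measure_union_le _ _
          _ = ν {ω | c < B ω} := by rw [hc, add_zero]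
      · exact measure_mono fun ω (hω : c < B ω) => le_of_lt hω
    rw [hset, hval] at hS
    exact (ENNReal.tendsto_toReal (measure_ne_top _ _)).comp hS
  -- right sequence
  have hR : Tendsto (fun n : ℕ => φ (c + 1 / (n + 1))) atTop (𝓝 (φ c)) := by
    have hS : Tendsto (fun n : ℕ => ν {ω | c + 1 / (n + 1) < B ω}) atTop
        (𝓝 (ν (⋃ n : ℕ, {ω | c + 1 / (n + 1 : ℝ) < B ω}))) := by
      apply tendsto_measure_iUnion_atTop
      intro n m hnm ω hω
      have h1 : c + 1 / (m + 1 : ℝ) ≤ c + 1 / (n + 1 : ℝ) := by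
        have : (1 : ℝ) / (m + 1) ≤ 1 / (n + 1) := by
          apply one_div_le_one_div_of_le (by positivity)
          have : (n : ℝ) ≤ m := Nat.cast_le.2 hnm
          linarith
        linarith
      exact lt_of_le_of_lt h1 hω
    have hset : (⋃ n : ℕ, {ω | c + 1 / (n + 1 : ℝ) < B ω}) = {ω | c < B ω} := by
      ext ω
      simp only [mem_iUnion, mem_setOf_eq]
      constructor
      · rintro ⟨n, hn⟩
        have : (0 : ℝ) < 1 / (n + 1) := by positivity
        linarith
      · intro h
        obtain ⟨n, hn⟩ := exists_nat_one_div_lt (sub_pos.2 h)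
        exact ⟨n, by linarith⟩
    rw [hset] at hS
    exact (ENNReal.tendsto_toReal (measure_ne_top _ _)).comp hS
  -- main
  rw [Metric.tendsto_nhds]
  intro ε hε
  obtain ⟨n, hn1, hn2⟩ :=
    ((Metric.tendsto_nhds.1 hL ε hε).and (Metric.tendsto_nhds.1 hR ε hε)).exists
  have hδpos : (0 : ℝ) < 1 / (n + 1) := by positivity
  have haev : ∀ᶠ t in atTop, dist (a t) c < 1 / (n + 1) :=
    Metric.tendsto_nhds.1 ha _ hδpos
  filter_upwards [haev] with t hdist
  rw [Real.dist_eq] at hdist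
  have h1 : c - 1 / (n + 1) ≤ a t := by
    have := abs_sub_lt_iff.1 hdist
    linarith [this.2]
  have h2 : a t ≤ c + 1 / (n + 1) := by
    have := abs_sub_lt_iff.1 hdist
    linarith [this.1]
  have hu : φ (a t) ≤ φ (c - 1 / (n + 1)) := hmono h1
  have hl : φ (c + 1 / (n + 1)) ≤ φ (a t) := hmono h2
  rw [Real.dist_eq] at hn1 hn2 ⊢
  rw [abs_sub_lt_iff] at hn1 hn2 ⊢
  constructor
  · linarith [hn1.1]
  · linarith [hn2.2]
/-- if `n : [0,∞) → (0,∞)` is measurable with `n(t) → n* > 0`, and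
`B, D ≥ 0` are random variables with `E[D] < ∞`, then with
`f(s,t) = P{B > ∫_s^t du/n(u), D > t−s}` one has
`∫_0^t f(s,t) ds → E[min(n* B, D)]` as `t → ∞`. -/
theorem layered_integral_tendsto
    {Ω : Type*} [MeasurableSpace Ω] (P : Measure Ω) [IsProbabilityMeasure P]
    (nf : ℝ → ℝ) (hmn : Measurable nf) (hnpos : ∀ t, 0 ≤ t → 0 < nf t)
    (nstar : ℝ) (hnstar : 0 < nstar) (hlim : Tendsto nf atTop (nhds nstar))
    (B D : Ω → ℝ) (hmB : Measurable B) (hmD : Measurable D)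
    (hBnn : ∀ ω, 0 ≤ B ω) (hDnn : ∀ ω, 0 ≤ D ω)
    (hDint : Integrable D P) :
    Tendsto
      (fun t : ℝ => ∫ s in (0 : ℝ)..t,
        (P {ω | (∫ u in s..t, 1 / nf u) < B ω ∧ t - s < D ω}).toReal)
      atTop (nhds (∫ ω, min (nstar * B ω) (D ω) ∂P)) := by
  classical
  set g2 : ℝ → ℝ → ℝ := fun x r => (P {ω | x < B ω ∧ r < D ω}).toReal with hg2
  set A : ℝ → ℝ → ℝ := fun t r =>
    (∫⁻ u in Ioc (t - r) t, ENNReal.ofReal (1 / nf u)).toReal with hA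
  set G : ℝ → ℝ → ℝ := fun t => (Ioc 0 t).indicator (fun r => g2 (A t r) r) with hG
  set Lf : ℝ → ℝ := fun r => (P {ω | r < min (nstar * B ω) (D ω)}).toReal with hLf
  set bound : ℝ → ℝ := fun r => (P {ω | r < D ω}).toReal with hbound
  -- conversion between interval integral and A
  have hIeq : ∀ x t : ℝ, 0 ≤ x → x ≤ t →
      (∫ u in x..t, 1 / nf u) = (∫⁻ u in Ioc x t, ENNReal.ofReal (1 / nf u)).toReal := by
    intro x t hx hxt
    rw [intervalIntegral.integral_of_le hxt,
      integral_eq_lintegral_of_nonneg_ae (f := fun u => 1 / nf u) ?_ ((measurable_const.div hmn).aestronglyMeasurable)]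
    filter_upwards [ae_restrict_mem measurableSet_Ioc] with u hu
    exact le_of_lt (one_div_pos.2 (hnpos u (le_trans hx hu.1.le)))
  -- measurability of g2 as function of a pair
  have hs : MeasurableSet {p : (ℝ × ℝ) × Ω | p.1.1 < B p.2 ∧ p.1.2 < D p.2} := by
    exact (measurableSet_lt measurable_fst.fst (hmB.comp measurable_snd)).inter
      (measurableSet_lt measurable_fst.snd (hmD.comp measurable_snd))
  have hg2m : Measurable (fun p : ℝ × ℝ => g2 p.1 p.2) :=
    (measurable_measure_prodMk_left hs).ennreal_toReal
  -- measurability of G t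
  have hGm : ∀ t : ℝ, Measurable (G t) := by
    intro t
    apply Measurable.indicator _ measurableSet_Ioc
    have hanti : Antitone (fun x : ℝ => ∫⁻ u in Ioc x t, ENNReal.ofReal (1 / nf u)) :=
      fun x y hxy => lintegral_mono_set (Ioc_subset_Ioc_left hxy)
    have hAm : Measurable (A t) :=
      ((hanti.measurable).comp (measurable_const.sub measurable_id)).ennreal_toReal
    exact hg2m.comp (hAm.prodMk measurable_id)
  -- bound
  have hboundm : Measurable bound := by
    have hanti : Antitone bound := fun x y hxy =>
      ENNReal.toReal_mono (measure_ne_top _ _)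
        (measure_mono fun ω hω => lt_of_le_of_lt hxy hω)
    exact hanti.measurable
  have hbound_nonneg : ∀ r : ℝ, 0 ≤ bound r := fun r => ENNReal.toReal_nonneg
  have hbound_int : Integrable bound (volume.restrict (Ioi 0)) := by
    refine ⟨hboundm.aestronglyMeasurable, ?_⟩
    rw [hasFiniteIntegral_iff_ofReal (Eventually.of_forall hbound_nonneg)]
    have h1 : ∀ r : ℝ, ENNReal.ofReal (bound r) = P {ω | r < D ω} := fun r =>
      ENNReal.ofReal_toReal (measure_ne_top _ _)
    rw [lintegral_congr h1,
      ← lintegral_eq_lintegral_meas_lt P (Eventually.of_forall hDnn) hmD.aemeasurable]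
    exact hDint.lintegral_lt_top
  -- integrability of the min
  have hmin_nonneg : ∀ ω, 0 ≤ min (nstar * B ω) (D ω) := fun ω =>
    le_min (mul_nonneg hnstar.le (hBnn ω)) (hDnn ω)
  have hmin_int : Integrable (fun ω => min (nstar * B ω) (D ω)) P := by
    apply hDint.mono (f := fun ω => min (nstar * B ω) (D ω)) ((measurable_const.mul hmB).min hmD).aestronglyMeasurable
    refine Eventually.of_forall fun ω => ?_
    rw [Real.norm_eq_abs, Real.norm_eq_abs, abs_of_nonneg (hmin_nonneg ω),
      abs_of_nonneg (hDnn ω)]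
    exact min_le_right _ _
  have hRHS : ∫ ω, min (nstar * B ω) (D ω) ∂P = ∫ r in Ioi 0, Lf r :=
    hmin_int.integral_eq_integral_meas_lt (Eventually.of_forall hmin_nonneg)
  -- a.e. pointwise convergence
  have hlimae : ∀ᵐ r ∂(volume.restrict (Ioi 0)),
      Tendsto (fun t => G t r) atTop (𝓝 (Lf r)) := by
    have hatoms : Set.Countable {c : ℝ | 0 < P {ω | B ω = c}} :=
      Measure.countable_meas_level_set_pos hmB
    set N : Set ℝ := (fun c => c * nstar) '' {c : ℝ | 0 < P {ω | B ω = c}} with hN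
    have hNnull : volume.restrict (Ioi 0) N = 0 :=
      le_antisymm (le_trans (Measure.restrict_apply_le _ _)
        ((hatoms.image _).measure_zero _).le) (zero_le)
    have hae1 : ∀ᵐ r ∂(volume.restrict (Ioi 0)), r ∉ N := by
      rw [ae_iff]
      simpa [not_not] using hNnull
    filter_upwards [hae1, ae_restrict_mem measurableSet_Ioi] with r hrN hr
    have hr0 : (0 : ℝ) < r := hr
    have hatom0 : P {ω | B ω = r / nstar} = 0 := by
      by_contra hcon
      exact hrN ⟨r / nstar, pos_iff_ne_zero.2 hcon, by field_simp⟩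
    set ν := P.restrict {ω | r < D ω} with hν
    haveI : IsFiniteMeasure ν := by
      rw [hν]; infer_instance
    have hcnull : ν {ω | B ω = r / nstar} = 0 :=
      le_antisymm (le_trans (Measure.restrict_apply_le _ _) hatom0.le) (zero_le)
    have htm := tendsto_meas_gt ν hmB hcnull
      (tendsto_primitive_aux nf hmn nstar hnstar hlim r hr0.le)
    have hνap : ∀ x : ℝ, ν {ω | x < B ω} = P {ω | x < B ω ∧ r < D ω} := by
      intro x
      rw [hν, Measure.restrict_apply (measurableSet_lt measurable_const hmB)]
      rfl
    have hLval : (ν {ω | r / nstar < B ω}).toReal = Lf r := by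
      rw [hνap, hLf]
      congr 2
      ext ω
      simp only [mem_setOf_eq, lt_min_iff]
      constructor
      · rintro ⟨h1, h2⟩
        exact ⟨by rwa [div_lt_iff₀ hnstar, mul_comm] at h1, h2⟩
      · rintro ⟨h1, h2⟩
        exact ⟨by rwa [div_lt_iff₀ hnstar, mul_comm], h2⟩
    have hev : (fun t => (ν {ω | (∫ u in (t - r)..t, 1 / nf u) < B ω}).toReal)
        =ᶠ[atTop] fun t => G t r := by
      filter_upwards [eventually_ge_atTop r] with t ht
      have hmem : r ∈ Ioc 0 t := ⟨hr0, ht⟩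
      rw [hG]
      simp only [Set.indicator_of_mem hmem]
      rw [hνap, hg2, hA]
      rw [hIeq (t - r) t (by linarith) (by linarith)]
    rw [← hLval]
    exact htm.congr' hev
  -- dominated convergence
  have hDCT : Tendsto (fun t : ℝ => ∫ r in Ioi 0, G t r) atTop
      (𝓝 (∫ r in Ioi 0, Lf r)) := by
    apply tendsto_integral_filter_of_dominated_convergence bound
      (Eventually.of_forall fun t => (hGm t).aestronglyMeasurable)
      (Eventually.of_forall fun t => Eventually.of_forall fun r => ?_)
      hbound_int hlimae
    rw [Real.norm_eq_abs]
    by_cases hm : r ∈ Ioc 0 t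
    · rw [hG]
      simp only [Set.indicator_of_mem hm]
      rw [abs_of_nonneg ENNReal.toReal_nonneg]
      exact ENNReal.toReal_mono (measure_ne_top _ _) (measure_mono fun ω hω => hω.2)
    · rw [hG]
      simp only [Set.indicator_of_notMem hm]
      simpa using hbound_nonneg r
  -- identify the two integrals for large t
  have hLHSeq : ∀ᶠ t in atTop, (∫ r in Ioi 0, G t r)
      = ∫ s in (0 : ℝ)..t,
        (P {ω | (∫ u in s..t, 1 / nf u) < B ω ∧ t - s < D ω}).toReal := by
    filter_upwards [eventually_ge_atTop (0 : ℝ)] with t ht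
    have h1 : (fun s => (P {ω | (∫ u in s..t, 1 / nf u) < B ω ∧ t - s < D ω}).toReal)
        = fun s => (fun r => (P {ω | (∫ u in (t - r)..t, 1 / nf u) < B ω ∧ r < D ω}).toReal)
          (t - s) := by
      funext s
      simp only [sub_sub_cancel]
    rw [h1, intervalIntegral.integral_comp_sub_left
      (fun r => (P {ω | (∫ u in (t - r)..t, 1 / nf u) < B ω ∧ r < D ω}).toReal) t,
      sub_self, sub_zero, intervalIntegral.integral_of_le ht]
    have h2 : ∫ r in Ioc 0 t,
        (P {ω | (∫ u in (t - r)..t, 1 / nf u) < B ω ∧ r < D ω}).toReal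
        = ∫ r in Ioc 0 t, (fun r => g2 (A t r) r) r := by
      apply setIntegral_congr_fun measurableSet_Ioc
      intro r hrm
      simp only [hg2, hA]
      rw [hIeq (t - r) t (by linarith [hrm.2]) (by linarith [hrm.1])]
    rw [h2]
    have h3 : ∫ r in Ioi 0, G t r = ∫ r in Ioi 0 ∩ Ioc 0 t, (fun r => g2 (A t r) r) r := by
      rw [hG, setIntegral_indicator measurableSet_Ioc]
    rw [h3, Set.inter_eq_self_of_subset_right (Ioc_subset_Ioi_self)]
  rw [hRHS]
  exact hDCT.congr' hLHSeq
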